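/- Define the graph D obtained from the complete bipartite join of two 3-element vertex sets B' and B'' by inserting two additional vertices in the interior of each of the 9 edges. Then the automorphism group of D is isomorphic to the semidirect product (ℤ/2) ⋉ (S₃ × S₃), of order 72. -/
import Mathlib


/-- Vertex type of the graph D: the six branch vertices B' ⊔ B'' (each a copy of
`Fin 3`), together with two subdivision vertices `(a, u, false)` (nearer to
a ∈ B') and `(a, u, true)` (nearer to u ∈ B'') on each edge {a, u} of the join
B' ⋆ B''. -/
abbrev V := (Fin 3 ⊕ Fin 3) ⊕ (Fin 3 × Fin 3 × Bool)

/-- One-directional adjacency of D. -/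
def dRel : V → V → Prop := fun v w =>
  match v, w with
  | Sum.inl (Sum.inl a), Sum.inr (a', _, b) => a = a' ∧ b = false
  | Sum.inl (Sum.inr u), Sum.inr (_, u', b) => u = u' ∧ b = true
  | Sum.inr (a, u, b), Sum.inr (a', u', b') => a = a' ∧ u = u' ∧ b ≠ b'
  | _, _ => False

/-- The graph D: the join of B' and B'' with each edge subdivided twice. -/
def D : SimpleGraph V := SimpleGraph.fromRel dRel

/-!
STATEMENT 11: The automorphism group of D is isomorphic to the semidirect
product (ℤ/2) ⋉ (S₃ × S₃), of order 72.
-/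

/-- The partition relation on `Bool × Fin 3`: two elements are related iff they
lie in the same part.  Its automorphism group is canonically the semidirect
product (ℤ/2) ⋉ (S₃ × S₃): the permutations of the 6-element set Bool × Fin 3
preserving the partition into the two 3-element parts or swapping them. -/
def partRel : Bool × Fin 3 → Bool × Fin 3 → Prop := fun x y => x.1 = y.1

/-! ### Auxiliary definitions and lemmas -/

instance : DecidableRel dRel := fun v w => by
  rcases v with (a|u)|⟨a,u,b⟩ <;> rcases w with (a'|u')|⟨a',u',b'⟩ <;>
    dsimp only [dRel] <;> infer_instance

instance : DecidableRel D.Adj := fun v w =>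
  decidable_of_iff (v ≠ w ∧ (dRel v w ∨ dRel w v)) (SimpleGraph.fromRel_adj dRel v w).symm

/-- Branch vertices, parametrized by `Bool × Fin 3`. -/
def β : Bool × Fin 3 → V := fun p =>
  match p with
  | (false, a) => Sum.inl (Sum.inl a)
  | (true, u) => Sum.inl (Sum.inr u)

/-- Subdivision vertices: `mid p j` is the subdivision vertex nearer to the
branch vertex `β p`, on the edge towards the `j`-th vertex of the other part. -/
def mid : Bool × Fin 3 → Fin 3 → V := fun p j =>
  match p with
  | (false, a) => Sum.inr (a, j, false)
  | (true, u) => Sum.inr (j, u, true)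

lemma adj_bb : ∀ p q, ¬ D.Adj (β p) (β q) := by decide
lemma adj_bm : ∀ p q j, D.Adj (β p) (mid q j) ↔ p = q := by decide
lemma adj_mb : ∀ p q j, D.Adj (mid q j) (β p) ↔ p = q := by decide
lemma adj_mm : ∀ p j q k, D.Adj (mid p j) (mid q k) ↔ (q = (!p.1, j) ∧ k = p.2) := by decide
lemma V_cases : ∀ v : V, (∃ p, v = β p) ∨ ∃ p j, v = mid p j := by decide
lemma β_inj : ∀ p q, β p = β q → p = q := by decide

/-- "Has at least three distinct neighbours" — an automorphism-invariant
property characterizing branch vertices. -/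
def Pv (v : V) : Prop := ∃ w1, D.Adj v w1 ∧ ∃ w2, D.Adj v w2 ∧ ∃ w3, D.Adj v w3 ∧
  (w1 ≠ w2 ∧ w1 ≠ w3 ∧ w2 ≠ w3)

set_option synthInstance.maxSize 2000 in
instance : DecidablePred Pv := fun v => by unfold Pv; infer_instance

lemma Pv_iff : ∀ v : V, Pv v ↔ ∃ p, v = β p := by decide

lemma same_part_iff : ∀ p q : Bool × Fin 3,
    p.1 = q.1 ↔ ¬ ∃ m, D.Adj (β p) m ∧ ∃ m', D.Adj m m' ∧ D.Adj m' (β q) := by decide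

lemma mid_unique : ∀ q r : Bool × Fin 3, q.1 ≠ r.1 → ∀ w : V,
    ((D.Adj (β q) w ∧ ∃ w', D.Adj w w' ∧ D.Adj w' (β r)) ↔ w = mid q r.2) := by decide

lemma bool_ne_iff {x y : Bool} (h : x ≠ y) : x = !y := by revert h; revert x y; decide

/-- The vertex map induced by a map of `Bool × Fin 3`. -/
def Fmap (f : Bool × Fin 3 → Bool × Fin 3) : V → V := fun v =>
  match v with
  | Sum.inl (Sum.inl a) => β (f (false, a))
  | Sum.inl (Sum.inr u) => β (f (true, u))
  | Sum.inr (a, u, false) => mid (f (false, a)) (f (true, u)).2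
  | Sum.inr (a, u, true) => mid (f (true, u)) (f (false, a)).2

lemma Fmap_β (f : Bool × Fin 3 → Bool × Fin 3) : ∀ p, Fmap f (β p) = β (f p) := by
  rintro ⟨(_|_), a⟩ <;> rfl

lemma Fmap_mid (f : Bool × Fin 3 → Bool × Fin 3) :
    ∀ p j, Fmap f (mid p j) = mid (f p) (f (!p.1, j)).2 := by
  rintro ⟨(_|_), a⟩ j <;> rfl

lemma part_iff (f : partRel ≃r partRel) (p q : Bool × Fin 3) :
    (f p).1 = (f q).1 ↔ p.1 = q.1 := f.map_rel_iff

lemma part_opp (f : partRel ≃r partRel) (p : Bool × Fin 3) (j : Fin 3) :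
    (f (!p.1, j)).1 = !(f p).1 := by
  apply bool_ne_iff
  intro h
  have := (part_iff f (!p.1, j) p).mp h
  simp at this

lemma opp_pair (f : partRel ≃r partRel) (p : Bool × Fin 3) (j : Fin 3) :
    (!(f p).1, (f (!p.1, j)).2) = f (!p.1, j) :=
  Prod.ext (part_opp f p j).symm rfl

lemma Fmap_adj (f : partRel ≃r partRel) :
    ∀ v w, D.Adj (Fmap f v) (Fmap f w) ↔ D.Adj v w := by
  have hinj : ∀ {x y : Bool × Fin 3}, f x = f y → x = y := fun h => f.toEquiv.injective h
  intro v w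
  rcases V_cases v with ⟨p, rfl⟩ | ⟨p, j, rfl⟩ <;>
    rcases V_cases w with ⟨q, rfl⟩ | ⟨q, k, rfl⟩
  · rw [Fmap_β, Fmap_β]
    exact iff_of_false (adj_bb _ _) (adj_bb _ _)
  · rw [Fmap_β, Fmap_mid, adj_bm, adj_bm]
    exact ⟨fun h => hinj h, fun h => h ▸ rfl⟩
  · rw [Fmap_mid, Fmap_β, adj_mb, adj_mb]
    exact ⟨fun h => hinj h, fun h => h ▸ rfl⟩
  · rw [Fmap_mid, Fmap_mid, adj_mm, adj_mm]
    constructor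
    · rintro ⟨h1, h2⟩
      have hq : f q = f (!p.1, j) := by
        rw [h1, opp_pair]
      have hq' : q = (!p.1, j) := hinj hq
      refine ⟨hq', ?_⟩
      have hk : f (!q.1, k) = f p := by
        refine Prod.ext ?_ h2
        have : (!q.1 : Bool) = p.1 := by rw [hq']; simp
        rw [(part_iff f (!q.1, k) p).mpr this]
      have := hinj hk
      rw [← this]
    · rintro ⟨rfl, rfl⟩
      constructor
      · exact (opp_pair f p j).symm
      · congr 1
        apply congrArg f
        simp

/-- The graph automorphism induced by an automorphism of the partition. -/
def Φ (f : partRel ≃r partRel) : D ≃g D where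
  toFun := Fmap f
  invFun := Fmap f.symm
  left_inv := by
    intro v
    rcases V_cases v with ⟨p, rfl⟩ | ⟨p, j, rfl⟩
    · rw [Fmap_β, Fmap_β, f.symm_apply_apply]
    · rw [Fmap_mid, Fmap_mid, opp_pair f p j, f.symm_apply_apply, f.symm_apply_apply]
  right_inv := by
    intro v
    rcases V_cases v with ⟨p, rfl⟩ | ⟨p, j, rfl⟩
    · rw [Fmap_β, Fmap_β, f.apply_symm_apply]
    · rw [Fmap_mid, Fmap_mid, opp_pair f.symm p j, f.apply_symm_apply, f.apply_symm_apply]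
  map_rel_iff' := by
    intro v w
    exact Fmap_adj f v w

lemma Φ_apply (f : partRel ≃r partRel) (v : V) : Φ f v = Fmap f v := rfl

lemma Φ_mul (f g : partRel ≃r partRel) : Φ (f * g) = Φ f * Φ g := by
  apply RelIso.ext
  intro v
  rw [RelIso.mul_apply, Φ_apply, Φ_apply, Φ_apply]
  rcases V_cases v with ⟨p, rfl⟩ | ⟨p, j, rfl⟩
  · rw [Fmap_β, Fmap_β, Fmap_β]
    rfl
  · rw [Fmap_mid, Fmap_mid, Fmap_mid]
    show mid (f (g p)) ((f * g) (!p.1, j)).2 = mid (f (g p)) ((f (!(g p).1, (g (!p.1, j)).2)).2)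
    rw [opp_pair g p j]
    rfl

/-- `Φ` as a multiplicative homomorphism. -/
def ΦHom : (partRel ≃r partRel) →ₙ* (D ≃g D) := ⟨Φ, Φ_mul⟩

lemma Φ_injective : Function.Injective Φ := by
  intro f g h
  apply RelIso.ext
  intro p
  apply β_inj
  have := DFunLike.congr_fun h (β p)
  rwa [Φ_apply, Φ_apply, Fmap_β, Fmap_β] at this

/-- Extract the branch label of a branch vertex. -/
def toBranch : V → Bool × Fin 3 := fun v =>
  match v with
  | Sum.inl (Sum.inl a) => (false, a)
  | Sum.inl (Sum.inr u) => (true, u)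
  | _ => (false, 0)

lemma toBranch_β : ∀ p, toBranch (β p) = p := by decide

lemma iso_branch (e : D ≃g D) (p : Bool × Fin 3) : ∃ q, e (β p) = β q := by
  have hP : Pv (e (β p)) := by
    obtain ⟨w1, h1, w2, h2, w3, h3, h12, h13, h23⟩ := (Pv_iff (β p)).mpr ⟨p, rfl⟩
    refine ⟨e w1, e.map_rel_iff.mpr h1, e w2, e.map_rel_iff.mpr h2,
      e w3, e.map_rel_iff.mpr h3, ?_, ?_, ?_⟩
    · exact fun h => h12 (e.toEquiv.injective h)
    · exact fun h => h13 (e.toEquiv.injective h)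
    · exact fun h => h23 (e.toEquiv.injective h)
  exact (Pv_iff _).mp hP

lemma Φ_surjective : Function.Surjective Φ := by
  intro e
  have hbr : ∀ p, e (β p) = β (toBranch (e (β p))) := fun p => by
    obtain ⟨q, hq⟩ := iso_branch e p; rw [hq, toBranch_β]
  have hbr' : ∀ p, e.symm (β p) = β (toBranch (e.symm (β p))) := fun p => by
    obtain ⟨q, hq⟩ := iso_branch e.symm p; rw [hq, toBranch_β]
  set g : Bool × Fin 3 → Bool × Fin 3 := fun p => toBranch (e (β p)) with hg
  set g' : Bool × Fin 3 → Bool × Fin 3 := fun p => toBranch (e.symm (β p)) with hg'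
  have hgg' : ∀ p, g' (g p) = p := by
    intro p
    show toBranch (e.symm (β (toBranch (e (β p))))) = p
    rw [← hbr p, e.symm_apply_apply, toBranch_β]
  have hg'g : ∀ p, g (g' p) = p := by
    intro p
    show toBranch (e (β (toBranch (e.symm (β p))))) = p
    rw [← hbr' p, e.apply_symm_apply, toBranch_β]
  have key : ∀ x, e.symm (β (g x)) = β x := fun x => by
    rw [← hbr x, e.symm_apply_apply]
  have hrel : ∀ p q : Bool × Fin 3, (g p).1 = (g q).1 ↔ p.1 = q.1 := by
    intro p q
    rw [same_part_iff, same_part_iff p q]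
    apply not_congr
    constructor
    · rintro ⟨m, h1, m', h2, h3⟩
      refine ⟨e.symm m, ?_, e.symm m', e.symm.map_rel_iff.mpr h2, ?_⟩
      · rw [← key p]; exact e.symm.map_rel_iff.mpr h1
      · rw [← key q]; exact e.symm.map_rel_iff.mpr h3
    · rintro ⟨m, h1, m', h2, h3⟩
      refine ⟨e m, ?_, e m', e.map_rel_iff.mpr h2, ?_⟩
      · rw [← hbr p]; exact e.map_rel_iff.mpr h1
      · rw [← hbr q]; exact e.map_rel_iff.mpr h3
  refine ⟨⟨⟨g, g', hgg', hg'g⟩, @fun p q => hrel p q⟩, ?_⟩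
  apply RelIso.ext
  intro v
  rw [Φ_apply]
  rcases V_cases v with ⟨p, rfl⟩ | ⟨p, j, rfl⟩
  · rw [Fmap_β]
    exact (hbr p).symm
  · rw [Fmap_mid]
    have hne : (g p).1 ≠ (g (!p.1, j)).1 := by
      intro h
      have := (hrel p (!p.1, j)).mp h
      simp at this
    have h1 : D.Adj (β (g p)) (e (mid p j)) := by
      rw [← hbr p]; exact e.map_rel_iff.mpr ((adj_bm p p j).mpr rfl)
    have h2 : D.Adj (e (mid p j)) (e (mid (!p.1, j) p.2)) :=
      e.map_rel_iff.mpr ((adj_mm p j (!p.1, j) p.2).mpr ⟨rfl, rfl⟩)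
    have h3 : D.Adj (e (mid (!p.1, j) p.2)) (β (g (!p.1, j))) := by
      rw [← hbr (!p.1, j)]
      exact e.map_rel_iff.mpr ((adj_mb (!p.1, j) (!p.1, j) p.2).mpr rfl)
    have := (mid_unique (g p) (g (!p.1, j)) hne (e (mid p j))).mp
      ⟨h1, e (mid (!p.1, j) p.2), h2, h3⟩
    exact this.symm

/-- Explicit parametrization of the automorphisms of the partition by
`Bool × S₃ × S₃`. -/
def Gfun (z : Bool × Equiv.Perm (Fin 3) × Equiv.Perm (Fin 3)) : partRel ≃r partRel where
  toFun := fun x => (xor x.1 z.1, if x.1 then z.2.2 x.2 else z.2.1 x.2)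
  invFun := fun y => (xor y.1 z.1, if xor y.1 z.1 then z.2.2.symm y.2 else z.2.1.symm y.2)
  left_inv := by
    obtain ⟨s, p, q⟩ := z
    rintro ⟨b, i⟩
    cases b <;> cases s <;> simp
  right_inv := by
    obtain ⟨s, p, q⟩ := z
    rintro ⟨c, i⟩
    cases c <;> cases s <;> simp
  map_rel_iff' := by
    rintro ⟨b, i⟩ ⟨b', i'⟩
    show xor b z.1 = xor b' z.1 ↔ b = b'
    cases b <;> cases b' <;> cases z.1 <;> simp

lemma Gfun_apply (z : Bool × Equiv.Perm (Fin 3) × Equiv.Perm (Fin 3)) (x : Bool × Fin 3) :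
    Gfun z x = (xor x.1 z.1, if x.1 then z.2.2 x.2 else z.2.1 x.2) := rfl

lemma G_inj : Function.Injective Gfun := by
  rintro ⟨s, p, q⟩ ⟨s', p', q'⟩ h
  have happ : ∀ x, Gfun (s, p, q) x = Gfun (s', p', q') x := fun x => by rw [h]
  have hs : s = s' := by
    have := congrArg Prod.fst (happ (false, 0))
    simpa [Gfun_apply] using this
  subst hs
  have hp : p = p' := Equiv.ext fun i => by
    have := congrArg Prod.snd (happ (false, i))
    simpa [Gfun_apply] using this
  have hq : q = q' := Equiv.ext fun i => by
    have := congrArg Prod.snd (happ (true, i))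
    simpa [Gfun_apply] using this
  rw [hp, hq]

lemma G_surj : Function.Surjective Gfun := by
  intro f
  set s := (f (false, 0)).1 with hs
  have hpart : ∀ b i, (f (b, i)).1 = xor b s := by
    intro b i
    cases b
    · have : (f (false, i)).1 = (f (false, 0)).1 := (part_iff f _ _).mpr rfl
      simpa using this
    · have hne : (f (true, i)).1 ≠ (f (false, 0)).1 := by
        intro h
        have := (part_iff f (true, i) (false, 0)).mp h
        simp at this
      have := bool_ne_iff hne
      simpa using this
  have hpinj : Function.Injective (fun i => (f (false, i)).2) := by
    intro i j hij
    have h1 : (f (false, i)).1 = (f (false, j)).1 := (part_iff f _ _).mpr rfl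
    have h2 : f (false, i) = f (false, j) := Prod.ext h1 hij
    have := f.toEquiv.injective h2
    exact congrArg Prod.snd this
  have hqinj : Function.Injective (fun i => (f (true, i)).2) := by
    intro i j hij
    have h1 : (f (true, i)).1 = (f (true, j)).1 := (part_iff f _ _).mpr rfl
    have h2 : f (true, i) = f (true, j) := Prod.ext h1 hij
    have := f.toEquiv.injective h2
    exact congrArg Prod.snd this
  refine ⟨⟨s, Equiv.ofBijective _ hpinj.bijective_of_finite,
    Equiv.ofBijective _ hqinj.bijective_of_finite⟩, ?_⟩
  apply RelIso.ext
  rintro ⟨b, i⟩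
  refine Prod.ext ?_ ?_
  · show xor b s = (f (b, i)).1
    rw [hpart]
  · cases b <;> rfl

theorem stmt11 :
    Nonempty ((D ≃g D) ≃* (partRel ≃r partRel)) ∧ Nat.card (D ≃g D) = 72 := by
  have iso : (partRel ≃r partRel) ≃* (D ≃g D) :=
    MulEquiv.ofBijective ΦHom ⟨Φ_injective, Φ_surjective⟩
  refine ⟨⟨iso.symm⟩, ?_⟩
  have h1 : Nat.card (D ≃g D) = Nat.card (partRel ≃r partRel) :=
    Nat.card_congr iso.symm.toEquiv
  have h2 : Nat.card (Bool × Equiv.Perm (Fin 3) × Equiv.Perm (Fin 3)) =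
      Nat.card (partRel ≃r partRel) :=
    Nat.card_eq_of_bijective Gfun ⟨G_inj, G_surj⟩
  rw [h1, ← h2, Nat.card_eq_fintype_card]
  simp [Fintype.card_perm]
  norm_num [Nat.factorial]
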